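/- Let G be a directed graph and let π : V → ℕ be a labeling such that (a) if x and y lie in distinct strongly connected components of G and there is a path from x to y, then π(x) < π(y), and (b) strongly connected vertices have equal labels. Let s be a vertex, V_s the set of vertices reachable from s, 𝒮_s the set of SCCs reachable from s, and 𝒮'_s an arbitrary subset of 𝒮_s. Suppose H is a subgraph of G induced-restricted to V_s with V(H) = V_s satisfying: (1) for each t ∈ V_s \ {s}, H contains an edge (v,t) with v ∈ ⋃𝒮'_s minimizing π(v) over all edges (v,t) of G[V_s] with v ∈ ⋃𝒮'_s, whenever such an edge exists; (2) for every pair (X,Y) ∈ (𝒮_s \ 𝒮'_s) × 𝒮_s, H contains some edge of G from X to Y if one exists; (3) for every S ∈ 𝒮_s, H restricted to S is strongly connected. Then every vertex of V_s is reachable from s in H. -/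

import Mathlib

/-- Two vertices are strongly connected: each reaches the other. -/
def SConn {V : Type*} (E : V → V → Prop) (u v : V) : Prop :=
  Relation.ReflTransGen E u v ∧ Relation.ReflTransGen E v u

theorem SConn.refl' {V : Type*} (E : V → V → Prop) (u : V) : SConn E u u :=
  ⟨Relation.ReflTransGen.refl, Relation.ReflTransGen.refl⟩

theorem SConn.symm' {V : Type*} {E : V → V → Prop} {u v : V} (h : SConn E u v) :
    SConn E v u := ⟨h.2, h.1⟩

theorem SConn.trans' {V : Type*} {E : V → V → Prop} {u v w : V}
    (h : SConn E u v) (h' : SConn E v w) : SConn E u w :=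
  ⟨h.1.trans h'.1, h'.2.trans h.2⟩

/-- On a path from `a` to `t` with `a` not strongly connected to `t`, there is an
edge `(u,w)` entering the SCC of `t`. -/
theorem enter_scc {V : Type*} {E : V → V → Prop} {a t : V}
    (hp : Relation.ReflTransGen E a t) (hns : ¬ SConn E a t) :
    ∃ u w, Relation.ReflTransGen E a u ∧ E u w ∧ SConn E w t ∧ ¬ SConn E u t := by
  induction hp using Relation.ReflTransGen.head_induction_on with
  | refl => exact absurd (SConn.refl' E t) hns
  | head hab hbt IH =>
    rename_i x b
    by_cases hbt' : SConn E b t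
    · exact ⟨x, b, Relation.ReflTransGen.refl, hab, hbt', hns⟩
    · obtain ⟨u, w, hxu, huw, hwt, hut⟩ := IH hbt'
      exact ⟨u, w, Relation.ReflTransGen.head hab hxu, huw, hwt, hut⟩

/-- Let `π` be a labeling increasing along paths between distinct SCCs and
constant on SCCs. Let `Vs` be the set of vertices reachable from `s`, and `Q = ⋃𝒮'_s`
the union of an arbitrary subfamily of SCCs reachable from `s` (a subset of `Vs` closed
under strong connectivity). If `H ⊆ G[Vs]` (with vertex set `Vs`) is such that
(1) every `t ∈ Vs \ {s}` having an incoming `G`-edge from `Q` gets in `H` such an edge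
whose tail minimizes `π` over all tails in `Q`,
(2) for every pair of distinct reachable SCCs `(X,Y)` with `X ⊄ 𝒮'_s`, `H` contains
some `G`-edge from `X` to `Y` if one exists, and
(3) `H` restricted to each reachable SCC is strongly connected,
then every vertex of `Vs` is reachable from `s` in `H`. -/
theorem reach_subgraph
    {V : Type*} [Fintype V] (E : V → V → Prop) (π : V → ℕ)
    (ha : ∀ x y, ¬ SConn E x y → Relation.ReflTransGen E x y → π x < π y)
    (hb : ∀ x y, SConn E x y → π x = π y)
    (s : V) (Vs : Set V) (hVs : Vs = {v | Relation.ReflTransGen E s v})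
    (Q : Set V) (hQsub : Q ⊆ Vs)
    (hQclosed : ∀ x ∈ Q, ∀ y, SConn E x y → y ∈ Q)
    (H : V → V → Prop)
    (hHsub : ∀ x y, H x y → E x y ∧ x ∈ Vs ∧ y ∈ Vs)
    (h1 : ∀ t ∈ Vs, t ≠ s → (∃ v ∈ Q, E v t) →
      ∃ v ∈ Q, H v t ∧ ∀ v' ∈ Q, E v' t → π v ≤ π v')
    (h2 : ∀ x ∈ Vs, ∀ y ∈ Vs, x ∉ Q → ¬ SConn E x y →
      (∃ x' y', SConn E x x' ∧ SConn E y y' ∧ E x' y') →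
      ∃ x' y', SConn E x x' ∧ SConn E y y' ∧ H x' y')
    (h3 : ∀ x ∈ Vs, ∀ y, SConn E x y →
      Relation.ReflTransGen (fun a b => H a b ∧ SConn E a x ∧ SConn E b x) x y) :
    ∀ t ∈ Vs, Relation.ReflTransGen H s t := by
  have hsVs : s ∈ Vs := by rw [hVs]; exact Relation.ReflTransGen.refl
  -- from a vertex in the SCC of t, reach t in H
  have hscc : ∀ w ∈ Vs, ∀ t, SConn E w t → Relation.ReflTransGen H w t := by
    intro w hw t hwt
    exact Relation.ReflTransGen.mono (fun a b h => h.1) w t (h3 w hw t hwt)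
  have main : ∀ n t, t ∈ Vs → π t = n → Relation.ReflTransGen H s t := by
    intro n
    induction n using Nat.strong_induction_on with
    | _ n IH =>
      intro t ht hπ
      by_cases hst : SConn E s t
      · exact hscc s hsVs t hst
      · -- find edge entering the SCC of t
        have hpath : Relation.ReflTransGen E s t := by rw [hVs] at ht; exact ht
        obtain ⟨u, w, hsu, huw, hwt, hut⟩ := enter_scc hpath hst
        have hu : u ∈ Vs := by rw [hVs]; exact hsu
        have hw : w ∈ Vs := by rw [hVs]; exact hsu.tail huw
        have hπwt : π w = π t := hb w t hwt
        have hnuw : ¬ SConn E u w := fun h => hut (h.trans' hwt)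
        have hπu : π u < π t := by
          rw [← hπwt]; exact ha u w hnuw (Relation.ReflTransGen.single huw)
        by_cases huQ : u ∈ Q
        · -- use h1 on w
          have hws : w ≠ s := by
            rintro rfl; exact hst (hwt)
          obtain ⟨v, hvQ, hHvw, hmin⟩ := h1 w hw hws ⟨u, huQ, huw⟩
          have hπv : π v < π t := lt_of_le_of_lt (hmin u huQ huw) hπu
          have hv : v ∈ Vs := hQsub hvQ
          have hsv : Relation.ReflTransGen H s v := IH (π v) (hπ ▸ hπv) v hv rfl
          exact (hsv.tail hHvw).trans (hscc w hw t hwt)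
        · -- use h2 on (u, w)
          obtain ⟨x', y', hux', hwy', hHxy⟩ :=
            h2 u hu w hw huQ hnuw ⟨u, w, SConn.refl' E u, SConn.refl' E w, huw⟩
          have hx' : x' ∈ Vs := (hHsub x' y' hHxy).2.1
          have hy' : y' ∈ Vs := (hHsub x' y' hHxy).2.2
          have hπx' : π x' < π t := by rw [← hb u x' hux']; exact hπu
          have hsx' : Relation.ReflTransGen H s x' := IH (π x') (hπ ▸ hπx') x' hx' rfl
          have hy't : SConn E y' t := (hwy'.symm').trans' hwt
          exact (hsx'.tail hHxy).trans (hscc y' hy' t hy't)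
  intro t ht
  exact main (π t) t ht rfl
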